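/- Well-quasi-order step of the pattern argument: Let N be a finite monoid, η : A* → N a morphism, and consider η-patterns (w₁,e₁,…,wₙ,eₙ,w_{n+1}) with all |wᵢ| ≤ 2k for a fixed bound k, ordered by the relation ⪯ defined via insertion of pattern blocks whose η-image equals the inserted idempotent. Then ⪯ is a well-quasi-order on this set: every infinite sequence (p̄ᵢ) of such patterns contains indices i < j with p̄ᵢ ⪯ p̄ⱼ. -/

import Mathlib

set_option linter.unusedSectionVars false
set_option maxHeartbeats 1000000


namespace Stmt16

/-- An `η`-pattern: a list of blocks `(wᵢ, eᵢ)` together with a final word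
`w_{n+1}`. -/
abbrev Pattern (A N : Type*) := List (FreeMonoid A × N) × FreeMonoid A

/-- The word `π(p̄) = w₁ ⋯ w_{n+1}` of a pattern. -/
def pword {A N : Type*} [Monoid N] (p : Pattern A N) : FreeMonoid A :=
  (p.1.map Prod.fst).prod * p.2

/-- Green's preorder `x ≤_J y`. -/
def leJ {N : Type*} [Monoid N] (x y : N) : Prop := ∃ u v : N, x = u * y * v

/-- The word following the `i`-th block: `w_{i+1}` (or the final word). -/
def nextWord {A N : Type*} (p : Pattern A N) (i : ℕ) : FreeMonoid A :=
  (((p.1.drop (i + 1)).head?).map Prod.fst).getD p.2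

/-- `p` is an `η`-pattern: nonemptiness of the words (when there is at least
one block), each `eᵢ` is an idempotent `J`-equivalent to `η(π(p̄))`, and
`η(wᵢ)eᵢ = η(wᵢ)`, `eᵢ η(w_{i+1}) = η(w_{i+1})`. -/
def IsPattern {A N : Type*} [Monoid N] (η : FreeMonoid A →* N)
    (p : Pattern A N) : Prop :=
  (p.1 ≠ [] → (∀ b ∈ p.1, b.1 ≠ 1) ∧ p.2 ≠ 1) ∧
  (∀ b ∈ p.1, IsIdempotentElem b.2 ∧ leJ b.2 (η (pword p)) ∧
    leJ (η (pword p)) b.2) ∧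
  (∀ i, ∀ hi : i < p.1.length,
    η (p.1.get ⟨i, hi⟩).1 * (p.1.get ⟨i, hi⟩).2 = η (p.1.get ⟨i, hi⟩).1 ∧
    (p.1.get ⟨i, hi⟩).2 * η (nextWord p i) = η (nextWord p i))

/-- `p` is `α`-guarded: for each block there is an idempotent `g ∈ E(M)` with
`η⁻¹(eᵢ) ∩ α⁻¹(g) ≠ ∅`, `α(wᵢ)g = α(wᵢ)` and `g α(w_{i+1}) = α(w_{i+1})`. -/
def Guarded {A M N : Type*} [Monoid M] [Monoid N] (η : FreeMonoid A →* N)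
    (α : FreeMonoid A →* M) (p : Pattern A N) : Prop :=
  ∀ i, ∀ hi : i < p.1.length, ∃ g : M, IsIdempotentElem g ∧
    (∃ w : FreeMonoid A, η w = (p.1.get ⟨i, hi⟩).2 ∧ α w = g) ∧
    α (p.1.get ⟨i, hi⟩).1 * g = α (p.1.get ⟨i, hi⟩).1 ∧
    g * α (nextWord p i) = α (nextWord p i)

/-- Membership in the set `Q`: `α`-guarded `η`-patterns all of whose words
have length at most `2k`. -/
def InQ {A M N : Type*} [Monoid M] [Monoid N] (η : FreeMonoid A →* N)
    (α : FreeMonoid A →* M) (k : ℕ) (p : Pattern A N) : Prop :=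
  IsPattern η p ∧ Guarded η α p ∧
  (∀ b ∈ p.1, (FreeMonoid.toList b.1).length ≤ 2 * k) ∧
  (FreeMonoid.toList p.2).length ≤ 2 * k

/-- Joining two patterns with an idempotent in between. -/
def join {A N : Type*} (p : Pattern A N) (f : N) (q : Pattern A N) :
    Pattern A N :=
  (p.1 ++ (p.2, f) :: q.1, q.2)

/-- The ordering `p ⪯ q` on `Q`: `q` is obtained from a split
`p = (p̄₁, f₁, …, p̄_ℓ, f_ℓ, p̄_{ℓ+1})` by inserting patterns `q̄ᵢ ∈ Q` with
`η(q̄ᵢ) = fᵢ`, yielding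
`q = (p̄₁, f₁, q̄₁, f₁, …, p̄_ℓ, f_ℓ, q̄_ℓ, f_ℓ, p̄_{ℓ+1})`. -/
def Prec {A M N : Type*} [Monoid M] [Monoid N] (η : FreeMonoid A →* N)
    (α : FreeMonoid A →* M) (k : ℕ) (p q : Pattern A N) : Prop :=
  ∃ (blocks : List (Pattern A N × N × Pattern A N)) (plast : Pattern A N),
    InQ η α k plast ∧
    (∀ b ∈ blocks, InQ η α k b.1 ∧ InQ η α k b.2.2 ∧
      IsIdempotentElem b.2.1 ∧ η (pword b.2.2) = b.2.1) ∧
    p = blocks.foldr (fun b acc => join b.1 b.2.1 acc) plast ∧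
    q = blocks.foldr (fun b acc => join b.1 b.2.1 (join b.2.2 b.2.1 acc)) plast

section Aux

variable {A M N : Type*} [Monoid M] [Monoid N] (η : FreeMonoid A →* N)
  (α : FreeMonoid A →* M) (k : ℕ)

/-- Product of the `η`-images of the block words. -/
def mu (l : List (FreeMonoid A × N)) : N := (l.map fun b => η b.1).prod

@[simp] lemma mu_nil : mu η ([] : List (FreeMonoid A × N)) = 1 := rfl

@[simp] lemma mu_cons (b : FreeMonoid A × N) (l : List (FreeMonoid A × N)) :
    mu η (b :: l) = η b.1 * mu η l := by simp [mu]

@[simp] lemma mu_append (l₁ l₂ : List (FreeMonoid A × N)) :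
    mu η (l₁ ++ l₂) = mu η l₁ * mu η l₂ := by simp [mu]

@[simp] lemma mu_singleton (b : FreeMonoid A × N) : mu η [b] = η b.1 := by simp [mu]

lemma eta_pword (l : List (FreeMonoid A × N)) (w : FreeMonoid A) :
    η (pword (l, w)) = mu η l * η w := by
  simp only [pword, map_mul, mu]
  congr 1
  rw [MonoidHom.map_list_prod, List.map_map]
  rfl

/-- the "head word" of a tail: first block word of `Y`, or else `w`. -/
def hw (Y : List (FreeMonoid A × N)) (w : FreeMonoid A) : FreeMonoid A :=
  ((Y.head?).map Prod.fst).getD w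

@[simp] lemma hw_nil (w : FreeMonoid A) : hw ([] : List (FreeMonoid A × N)) w = w := rfl

@[simp] lemma hw_cons (b : FreeMonoid A × N) (Y : List (FreeMonoid A × N)) (w : FreeMonoid A) :
    hw (b :: Y) w = b.1 := rfl

lemma hw_append_cons (Y : List (FreeMonoid A × N)) (b : FreeMonoid A × N)
    (R : List (FreeMonoid A × N)) (w : FreeMonoid A) :
    hw (Y ++ b :: R) w = hw Y b.1 := by cases Y <;> simp

lemma nextWord_eq (p : Pattern A N) (i : ℕ) :
    nextWord p i = hw (p.1.drop (i + 1)) p.2 := rfl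

/-- junction relations at an explicit decomposition. -/
lemma cj {p : Pattern A N} (hp : IsPattern η p) {X : List (FreeMonoid A × N)}
    {x : FreeMonoid A} {f : N} {Y : List (FreeMonoid A × N)} (hX : p.1 = X ++ (x, f) :: Y) :
    η x * f = η x ∧ f * η (hw Y p.2) = η (hw Y p.2) := by
  have hi : X.length < p.1.length := by rw [hX]; simp
  have hget : p.1.get ⟨X.length, hi⟩ = (x, f) := by
    simp only [List.get_eq_getElem, hX]
    rw [List.getElem_append_right (le_refl _)]
    simp
  have hdrop : p.1.drop (X.length + 1) = Y := by
    rw [hX, show X ++ (x, f) :: Y = (X ++ [(x, f)]) ++ Y by simp, List.drop_left']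
    simp
  have h := hp.2.2 X.length hi
  rw [hget] at h
  rw [nextWord_eq, hdrop] at h
  exact h

/-- guard relations at an explicit decomposition. -/
lemma cg {p : Pattern A N} (hp : Guarded η α p) {X : List (FreeMonoid A × N)}
    {x : FreeMonoid A} {f : N} {Y : List (FreeMonoid A × N)} (hX : p.1 = X ++ (x, f) :: Y) :
    ∃ g : M, IsIdempotentElem g ∧ (∃ w : FreeMonoid A, η w = f ∧ α w = g) ∧
      α x * g = α x ∧ g * α (hw Y p.2) = α (hw Y p.2) := by
  have hi : X.length < p.1.length := by rw [hX]; simp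
  have hget : p.1.get ⟨X.length, hi⟩ = (x, f) := by
    simp only [List.get_eq_getElem, hX]
    rw [List.getElem_append_right (le_refl _)]
    simp
  have hdrop : p.1.drop (X.length + 1) = Y := by
    rw [hX, show X ++ (x, f) :: Y = (X ++ [(x, f)]) ++ Y by simp, List.drop_left']
    simp
  have h := hp X.length hi
  rw [hget] at h
  rw [nextWord_eq, hdrop] at h
  exact h

lemma leJ_trans {x y z : N} (h1 : leJ x y) (h2 : leJ y z) : leJ x z := by
  obtain ⟨u, v, rfl⟩ := h1
  obtain ⟨u', v', rfl⟩ := h2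
  exact ⟨u * u', v' * v, by simp [mul_assoc]⟩

end Aux

section Seg

variable {A M N : Type*} [Monoid M] [Monoid N] (η : FreeMonoid A →* N)
  (α : FreeMonoid A →* M) (k : ℕ)

lemma eta_pword' (p : Pattern A N) : η (pword p) = mu η p.1 * η p.2 := by
  cases p; exact eta_pword η _ _

lemma seg_left {p : Pattern A N} (hp : InQ η α k p) {P L : List (FreeMonoid A × N)}
    {x : FreeMonoid A} {f : N} {R : List (FreeMonoid A × N)}
    (hd : p.1 = P ++ L ++ (x, f) :: R) : InQ η α k (L, x) := by
  have hmem : ∀ b ∈ L, b ∈ p.1 := by intro b hb; rw [hd]; simp [hb]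
  have hxf : (x, f) ∈ p.1 := by rw [hd]; simp
  have hne : p.1 ≠ [] := by rw [hd]; simp
  have hjx : η x * f = η x := (cj η hp.1 (by rw [hd, List.append_assoc])).1
  have hseg1 : leJ (η (pword p)) (η (pword ((L : List (FreeMonoid A × N)), x))) := by
    refine ⟨mu η P, mu η R * η p.2, ?_⟩
    rw [eta_pword' η p, hd, eta_pword]
    simp [mul_assoc]
  have hseg2 : leJ (η (pword ((L : List (FreeMonoid A × N)), x))) (η (pword p)) := by
    have h1 : leJ (η (pword ((L : List (FreeMonoid A × N)), x))) f := by
      refine ⟨mu η L * η x, 1, ?_⟩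
      rw [eta_pword, mul_one, mul_assoc, hjx]
    exact leJ_trans h1 (hp.1.2.1 (x, f) hxf).2.1
  have hsplit : ∀ i, (hi : i < L.length) →
      p.1 = (P ++ L.take i) ++ L[i] :: (L.drop (i + 1) ++ (x, f) :: R) := by
    intro i hi
    have h1 : L = L.take i ++ L[i] :: L.drop (i + 1) := by
      rw [← List.drop_eq_getElem_cons hi, List.take_append_drop]
    calc p.1 = P ++ L ++ (x, f) :: R := hd
      _ = P ++ (L.take i ++ L[i] :: L.drop (i + 1)) ++ (x, f) :: R := by rw [← h1]
      _ = (P ++ L.take i) ++ L[i] :: (L.drop (i + 1) ++ (x, f) :: R) := by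
          simp only [List.append_assoc, List.cons_append]
  refine ⟨⟨?_, ?_, ?_⟩, ?_, ?_, ?_⟩
  · intro _
    exact ⟨fun b hb => (hp.1.1 hne).1 b (hmem b hb), (hp.1.1 hne).1 (x, f) hxf⟩
  · intro b hb
    obtain ⟨hid, hb1, hb2⟩ := hp.1.2.1 b (hmem b hb)
    exact ⟨hid, leJ_trans hb1 hseg1, leJ_trans hseg2 hb2⟩
  · intro i hi
    have h := cj η hp.1 (hsplit i hi)
    rw [hw_append_cons] at h
    simpa only [List.get_eq_getElem, nextWord_eq] using h
  · intro i hi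
    have h := cg η α hp.2.1 (hsplit i hi)
    rw [hw_append_cons] at h
    simpa only [List.get_eq_getElem, nextWord_eq] using h
  · intro b hb; exact hp.2.2.1 b (hmem b hb)
  · exact hp.2.2.1 (x, f) hxf

lemma seg_right {p : Pattern A N} (hp : InQ η α k p) {P L : List (FreeMonoid A × N)}
    (hd : p.1 = P ++ L) : InQ η α k (L, p.2) := by
  have hmem : ∀ b ∈ L, b ∈ p.1 := by intro b hb; rw [hd]; simp [hb]
  have hsplit : ∀ i, (hi : i < L.length) →
      p.1 = (P ++ L.take i) ++ L[i] :: L.drop (i + 1) := by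
    intro i hi
    have h1 : L = L.take i ++ L[i] :: L.drop (i + 1) := by
      rw [← List.drop_eq_getElem_cons hi, List.take_append_drop]
    calc p.1 = P ++ L := hd
      _ = P ++ (L.take i ++ L[i] :: L.drop (i + 1)) := by rw [← h1]
      _ = (P ++ L.take i) ++ L[i] :: L.drop (i + 1) := by
          simp only [List.append_assoc, List.cons_append]
  have hseg1 : leJ (η (pword p)) (η (pword ((L : List (FreeMonoid A × N)), p.2))) := by
    refine ⟨mu η P, 1, ?_⟩
    rw [eta_pword' η p, hd, eta_pword]
    simp [mul_assoc]
  refine ⟨⟨?_, ?_, ?_⟩, ?_, ?_, ?_⟩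
  · intro hL
    have hne : p.1 ≠ [] := by
      rw [hd]; intro hcon
      exact hL (List.append_eq_nil_iff.mp hcon).2
    exact ⟨fun b hb => (hp.1.1 hne).1 b (hmem b hb), (hp.1.1 hne).2⟩
  · intro b hb
    have hLne : L ≠ [] := by rintro rfl; exact List.not_mem_nil hb
    obtain ⟨b₀, L', rfl⟩ : ∃ b₀ L', L = b₀ :: L' := by
      cases L with
      | nil => exact absurd rfl hLne
      | cons b₀ L' => exact ⟨b₀, L', rfl⟩
    have hd₀ : p.1 = P ++ (b₀.1, b₀.2) :: L' := by rw [hd]; try simp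
    have hj₀ : η b₀.1 * b₀.2 = η b₀.1 := (cj η hp.1 hd₀).1
    have hseg2 : leJ (η (pword ((b₀ :: L' : List (FreeMonoid A × N)), p.2))) (η (pword p)) := by
      have h1 : leJ (η (pword ((b₀ :: L' : List (FreeMonoid A × N)), p.2))) b₀.2 := by
        refine ⟨η b₀.1, mu η L' * η p.2, ?_⟩
        rw [eta_pword, mu_cons, hj₀]
        try simp [mul_assoc]
      exact leJ_trans h1 (hp.1.2.1 b₀ (hmem b₀ (by simp))).2.1
    obtain ⟨hid, hb1, hb2⟩ := hp.1.2.1 b (hmem b hb)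
    exact ⟨hid, leJ_trans hb1 hseg1, leJ_trans hseg2 hb2⟩
  · intro i hi
    have h := cj η hp.1 (hsplit i hi)
    simpa only [List.get_eq_getElem, nextWord_eq] using h
  · intro i hi
    have h := cg η α hp.2.1 (hsplit i hi)
    simpa only [List.get_eq_getElem, nextWord_eq] using h
  · intro b hb; exact hp.2.2.1 b (hmem b hb)
  · exact hp.2.2.2

lemma inQ_empty {w : FreeMonoid A} (hw : (FreeMonoid.toList w).length ≤ 2 * k) :
    InQ η α k (([] : List (FreeMonoid A × N)), w) := by
  refine ⟨⟨fun h => absurd rfl h, ?_, ?_⟩, ?_, ?_, hw⟩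
  · intro b hb; exact absurd hb List.not_mem_nil
  · intro i hi; exact absurd hi (by simp)
  · intro i hi; exact absurd hi (by simp)
  · intro b hb; exact absurd hb List.not_mem_nil

end Seg

section Alg

variable {N : Type*} [Monoid N]

theorem exists_pow_idem [Finite N] (z : N) : ∃ m : ℕ, 1 ≤ m ∧ IsIdempotentElem (z ^ m) := by
  obtain ⟨a, b, hab, h⟩ : ∃ a b : ℕ, a < b ∧ z ^ a = z ^ b := by
    obtain ⟨a, b, hne, h⟩ := Finite.exists_ne_map_eq_of_infinite (fun n : ℕ => z ^ n)
    rcases Ne.lt_or_gt hne with h' | h'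
    · exact ⟨a, b, h', h⟩
    · exact ⟨b, a, h', h.symm⟩
  set d := b - a with hd
  have hd1 : 1 ≤ d := by omega
  have key : ∀ c, a ≤ c → z ^ c = z ^ (c + d) := by
    intro c hc
    have : z ^ c = z ^ (c - a) * z ^ a := by
      rw [← pow_add]; congr 1; omega
    rw [this, h, ← pow_add]
    congr 1; omega
  have key2 : ∀ t c, a ≤ c → z ^ c = z ^ (c + t * d) := by
    intro t
    induction t with
    | zero => simp
    | succ n ih =>
      intro c hc
      rw [ih c hc, key (c + n * d) (by omega)]
      congr 1; ring
  refine ⟨(a + 1) * d, by nlinarith, ?_⟩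
  unfold IsIdempotentElem
  rw [← pow_add]
  exact (key2 (a + 1) ((a + 1) * d) (by nlinarith)).symm

theorem stab [Finite N] {e ρ u v : N} (h1 : e = u * ρ * v) (h2 : ρ * e = ρ) :
    ∃ d : N, d * ρ = e := by
  have claim : ∀ n : ℕ, 1 ≤ n → e = (u * ρ) ^ n * v ^ n := by
    intro n
    induction n with
    | zero => omega
    | succ m ih =>
      intro _
      rcases Nat.eq_or_lt_of_le (Nat.one_le_iff_ne_zero.mpr (by omega) : 1 ≤ m + 1) with h | h
      · simp [← h, h1]
      · have hm : 1 ≤ m := by omega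
        have ihm := ih hm
        calc e = u * ρ * v := h1
          _ = u * (ρ * e) * v := by rw [h2]
          _ = u * (ρ * ((u * ρ) ^ m * v ^ m)) * v := by rw [← ihm]
          _ = (u * ρ) ^ (m + 1) * v ^ (m + 1) := by
              rw [pow_succ', pow_succ]
              simp [mul_assoc]
  obtain ⟨m, hm1, hidem⟩ := exists_pow_idem (u * ρ)
  have he : e = (u * ρ) ^ m * v ^ m := claim m hm1
  have hfe : (u * ρ) ^ m * e = e := by
    conv_lhs => rw [he, ← mul_assoc, hidem]
    exact he.symm
  refine ⟨(u * ρ) ^ (m - 1) * u, ?_⟩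
  have hsp : (u * ρ) ^ m = (u * ρ) ^ (m - 1) * (u * ρ) := by
    rw [← pow_succ]; congr 1; omega
  calc (u * ρ) ^ (m - 1) * u * ρ
      = (u * ρ) ^ (m - 1) * u * (ρ * e) := by rw [h2]
    _ = (u * ρ) ^ m * e := by rw [hsp]; simp [mul_assoc]
    _ = e := hfe

theorem gap_eq [Finite N] {ρ e x : N} (h1 : ∃ u v : N, e = u * ρ * v) (h2 : ρ * e = ρ)
    (h3 : ρ * x = ρ) (h4 : e * x = x) : x = e := by
  obtain ⟨u, v, h1⟩ := h1
  obtain ⟨d, hd⟩ := stab h1 h2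
  have h5 : d * (ρ * x) = d * ρ := by rw [h3]
  rw [← mul_assoc, hd] at h5
  rw [← h4, h5]

end Alg

section Enc

variable {A M N : Type*} [Monoid M] [Monoid N] (η : FreeMonoid A →* N)
  (α : FreeMonoid A →* M) (k : ℕ)

/-- Enriched letters: a block (or `none` for the sentinel), the previous
idempotent (or `none` at the start), the product of all previous block words,
and the final word (for the sentinel; `1` for blocks). -/
abbrev Letter (A N : Type*) :=
  Option (FreeMonoid A × N) × Option N × N × FreeMonoid A

/-- The enriched encoding of a pattern suffix. -/
def encA : N → Option N → List (FreeMonoid A × N) → FreeMonoid A → List (Letter A N)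
  | ρ, pe, [], w => [(none, pe, ρ, w)]
  | ρ, pe, (u, e) :: l, w => (some (u, e), pe, ρ, 1) :: encA (ρ * η u) (some e) l w

@[simp] lemma encA_nil (ρ : N) (pe : Option N) (w : FreeMonoid A) :
    encA η ρ pe [] w = [(none, pe, ρ, w)] := rfl

@[simp] lemma encA_cons (ρ : N) (pe : Option N) (u : FreeMonoid A) (e : N)
    (l : List (FreeMonoid A × N)) (w : FreeMonoid A) :
    encA η ρ pe ((u, e) :: l) w = (some (u, e), pe, ρ, 1) :: encA η (ρ * η u) (some e) l w := rfl

lemma prevSome : ∀ (l : List (FreeMonoid A × N)) (ρ g : N) (w : FreeMonoid A)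
    (x : Letter A N), x ∈ encA η ρ (some g) l w → x.2.1 ≠ none := by
  intro l
  induction l with
  | nil =>
    intro ρ g w x hx
    simp only [encA_nil, List.mem_singleton] at hx
    subst hx; simp
  | cons b l ih =>
    intro ρ g w x hx
    obtain ⟨u, e⟩ := b
    simp only [encA_cons, List.mem_cons] at hx
    rcases hx with rfl | hx
    · simp
    · exact ih _ _ _ _ hx

lemma sublist_cons_split {γ : Type*} {a : γ} {l L : List γ} (h : List.Sublist (a :: l) L) :
    ∃ C T, L = C ++ a :: T ∧ List.Sublist l T := by
  generalize hx : a :: l = l₁ at h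
  induction h with
  | slnil => cases hx
  | cons b hsub ih =>
    obtain ⟨C, T, rfl, hs⟩ := ih hx
    exact ⟨b :: C, T, rfl, hs⟩
  | cons_cons b hsub =>
    injection hx with h1 h2
    subst h1; subst h2
    exact ⟨[], _, rfl, hsub⟩

end Enc

section Parse

variable {A M N : Type*} [Monoid M] [Monoid N] (η : FreeMonoid A →* N)
  (α : FreeMonoid A →* M) (k : ℕ)

lemma parse_block : ∀ (l₂ : List (FreeMonoid A × N)) (ρq : N) (pe : Option N)
    (w₂ : FreeMonoid A) (C : List (Letter A N)) (u₁ : FreeMonoid A) (e₁ e ρ : N)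
    (T : List (Letter A N)),
    encA η ρq pe l₂ w₂ = C ++ ((some (u₁, e₁), some e, ρ, 1) : Letter A N) :: T →
    ∃ c l₂', l₂ = c ++ (u₁, e₁) :: l₂' ∧
      (c = [] → pe = some e ∧ ρq = ρ) ∧
      (∀ h : c ≠ [], (c.getLast h).2 = e) ∧
      ρq * mu η c = ρ ∧
      T = encA η (ρ * η u₁) (some e₁) l₂' w₂ := by
  intro l₂
  induction l₂ with
  | nil =>
    intro ρq pe w₂ C u₁ e₁ e ρ T hEq
    cases C with
    | nil => simp only [encA_nil, List.nil_append] at hEq; cases hEq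
    | cons y C' =>
      simp only [encA_nil, List.cons_append] at hEq
      injection hEq with h1 h2
      exact absurd h2.symm (by simp)
  | cons b l₂'' ih =>
    intro ρq pe w₂ C u₁ e₁ e ρ T hEq
    obtain ⟨v, g⟩ := b
    rw [encA_cons] at hEq
    cases C with
    | nil =>
      rw [List.nil_append] at hEq
      injection hEq with h1 h2
      injection h1 with ha hb
      injection hb with hb1 hc
      injection hc with hc1 hd
      obtain ⟨rfl, rfl⟩ : v = u₁ ∧ g = e₁ := by
        have := Option.some.inj ha
        exact ⟨congrArg Prod.fst this, congrArg Prod.snd this⟩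
      refine ⟨[], l₂'', by simp, fun _ => ⟨hb1, hc1⟩, fun h => absurd rfl h, by simp [hc1], ?_⟩
      rw [← h2, hc1]
    | cons y C' =>
      rw [List.cons_append] at hEq
      injection hEq with h1 h2
      obtain ⟨c', l₂', rfl, hcnil, hlast, hmu, hT⟩ := ih (ρq * η v) (some g) w₂ C' u₁ e₁ e ρ T h2
      refine ⟨(v, g) :: c', l₂', by simp, fun h => absurd h (by simp), ?_, ?_, hT⟩
      · intro h
        cases c' with
        | nil =>
          obtain ⟨hg, -⟩ := hcnil rfl
          simp only [List.getLast_singleton]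
          exact Option.some.inj hg
        | cons z c'' =>
          rw [List.getLast_cons (by simp)]
          exact hlast (by simp)
      · rw [mu_cons, ← mul_assoc]
        exact hmu

lemma parse_sent : ∀ (l₂ : List (FreeMonoid A × N)) (ρq : N) (pe : Option N)
    (w₂ : FreeMonoid A) (C : List (Letter A N)) (e ρ : N) (w₁ : FreeMonoid A)
    (T : List (Letter A N)),
    encA η ρq pe l₂ w₂ = C ++ ((none, some e, ρ, w₁) : Letter A N) :: T →
    w₂ = w₁ ∧ T = [] ∧
      (l₂ = [] → pe = some e ∧ ρq = ρ) ∧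
      (∀ h : l₂ ≠ [], (l₂.getLast h).2 = e) ∧
      ρq * mu η l₂ = ρ := by
  intro l₂
  induction l₂ with
  | nil =>
    intro ρq pe w₂ C e ρ w₁ T hEq
    cases C with
    | nil =>
      rw [List.nil_append] at hEq
      injection hEq with h1 h2
      injection h1 with ha hb
      injection hb with hb1 hc
      injection hc with hc1 hd
      exact ⟨hd, h2.symm, fun _ => ⟨hb1, hc1⟩, fun h => absurd rfl h, by simp [hc1]⟩
    | cons y C' =>
      simp only [encA_nil, List.cons_append] at hEq
      injection hEq with h1 h2
      exact absurd h2.symm (by simp)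
  | cons b l₂'' ih =>
    intro ρq pe w₂ C e ρ w₁ T hEq
    obtain ⟨v, g⟩ := b
    rw [encA_cons] at hEq
    cases C with
    | nil =>
      rw [List.nil_append] at hEq
      injection hEq with h1 h2
      injection h1 with ha hb
      cases ha
    | cons y C' =>
      rw [List.cons_append] at hEq
      injection hEq with h1 h2
      obtain ⟨hw, hT, hnil, hlast, hmu⟩ := ih (ρq * η v) (some g) w₂ C' e ρ w₁ T h2
      refine ⟨hw, hT, fun h => absurd h (by simp), ?_, ?_⟩
      · intro h
        cases l₂'' with
        | nil =>
          obtain ⟨hg, -⟩ := hnil rfl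
          simp only [List.getLast_singleton]
          exact Option.some.inj hg
        | cons z c'' =>
          rw [List.getLast_cons (by simp)]
          exact hlast (by simp)
      · rw [mu_cons, ← mul_assoc]
        exact hmu

lemma enc_letter_bound : ∀ (l : List (FreeMonoid A × N)) (ρ : N) (pe : Option N)
    (w : FreeMonoid A),
    (∀ b ∈ l, (FreeMonoid.toList b.1).length ≤ 2 * k) →
    (FreeMonoid.toList w).length ≤ 2 * k →
    ∀ x ∈ encA η ρ pe l w,
      (∀ b ∈ x.1, (FreeMonoid.toList b.1).length ≤ 2 * k) ∧
      (FreeMonoid.toList x.2.2.2).length ≤ 2 * k := by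
  intro l
  induction l with
  | nil =>
    intro ρ pe w hl hww x hx
    simp only [encA_nil, List.mem_singleton] at hx
    subst hx
    exact ⟨fun b hb => absurd hb (by simp), hww⟩
  | cons b l ih =>
    intro ρ pe w hl hww x hx
    obtain ⟨u, e⟩ := b
    simp only [encA_cons, List.mem_cons] at hx
    rcases hx with rfl | hx
    · refine ⟨?_, by simp⟩
      intro b hb
      simp only [Option.mem_def, Option.some.injEq] at hb
      subst hb
      exact hl (u, e) (by simp)
    · exact ih _ _ _ (fun b hb => hl b (by simp [hb])) hww x hx

end Parse

section Core

variable {A M N : Type*} [Monoid M] [Monoid N] [Finite N] (η : FreeMonoid A →* N)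
  (α : FreeMonoid A →* M) (k : ℕ)

lemma chunk_pkg {q : Pattern A N} (hq : InQ η α k q) {R c rest : List (FreeMonoid A × N)}
    {ρ e : N}
    (hRd : q.1 = R ++ (c ++ rest))
    (hRne : R ≠ []) (hRe : (R.getLast hRne).2 = e) (hmuR : mu η R = ρ)
    (hcm : ρ * mu η c = ρ) (hc : c ≠ []) (hlast : (c.getLast hc).2 = e) :
    ∃ c' xc, c = c' ++ [(xc, e)] ∧ InQ η α k ((c' : List (FreeMonoid A × N)), xc) ∧
      η (pword ((c' : List (FreeMonoid A × N)), xc)) = e ∧ IsIdempotentElem e := by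
  have hRsplit : R = R.dropLast ++ [R.getLast hRne] := (List.dropLast_append_getLast hRne).symm
  set wl := R.getLast hRne with hwl
  have hq1 : q.1 = R.dropLast ++ (wl.1, e) :: (c ++ rest) := by
    rw [hRd]
    conv_lhs => rw [hRsplit]
    simp only [List.append_assoc, List.singleton_append]
    rw [show ((wl.1, e) : FreeMonoid A × N) = wl by rw [← hRe]]
  have cjq := cj η hq.1 hq1
  have hwlmem : wl ∈ q.1 := by rw [hRd]; exact List.mem_append_left _ (List.getLast_mem hRne)
  have hidem : IsIdempotentElem e := by
    have := (hq.1.2.1 wl hwlmem).1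
    rwa [hRe] at this
  have hmuRe : ρ * e = ρ := by
    rw [← hmuR]
    conv_lhs => rw [hRsplit]
    conv_rhs => rw [hRsplit]
    rw [mu_append, mu_singleton, mul_assoc]
    congr 1
    rw [show (wl.1 : FreeMonoid A) = ((wl.1, e) : FreeMonoid A × N).1 from rfl] at cjq ⊢
    exact cjq.1
  have hEJ : ∃ u v : N, e = u * ρ * v := by
    obtain ⟨a, b, hab⟩ : leJ e (η (pword q)) := by
      have := (hq.1.2.1 wl hwlmem).2.1
      rwa [hRe] at this
    refine ⟨a, mu η (c ++ rest) * η q.2 * b, ?_⟩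
    rw [hab, eta_pword' η q, hRd, mu_append, hmuR]
    simp [mul_assoc]
  obtain ⟨c₀, c'', rfl⟩ : ∃ c₀ c'', c = c₀ :: c'' := by
    cases c with
    | nil => exact absurd rfl hc
    | cons c₀ c'' => exact ⟨c₀, c'', rfl⟩
  have hex : e * mu η (c₀ :: c'') = mu η (c₀ :: c'') := by
    have h2 := cjq.2
    rw [show hw ((c₀ :: c'') ++ rest) q.2 = c₀.1 by simp] at h2
    rw [mu_cons, ← mul_assoc, h2]
  have hmc : mu η (c₀ :: c'') = e := gap_eq hEJ hmuRe hcm hex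
  have hcsplit : c₀ :: c'' = (c₀ :: c'').dropLast ++ [((c₀ :: c'').getLast hc)] :=
    (List.dropLast_append_getLast hc).symm
  refine ⟨(c₀ :: c'').dropLast, ((c₀ :: c'').getLast hc).1, ?_, ?_, ?_, hidem⟩
  · conv_lhs => rw [hcsplit]
    rw [show ((((c₀ :: c'').getLast hc).1, e) : FreeMonoid A × N) = (c₀ :: c'').getLast hc by
      rw [← hlast]]
  · refine seg_left η α k hq (P := R) (R := rest) (f := e) ?_
    have h5 : (c₀ :: c'') ++ rest
        = (c₀ :: c'').dropLast ++ ((((c₀ :: c'').getLast hc).1, e) :: rest) := by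
      conv_lhs => rw [hcsplit]
      simp only [List.append_assoc, List.singleton_append]
      rw [show ((((c₀ :: c'').getLast hc).1, e) : FreeMonoid A × N) = (c₀ :: c'').getLast hc by
        rw [← hlast]]
    rw [hRd]
    show R ++ ((c₀ :: c'') ++ rest) = _
    rw [h5]
    simp only [List.append_assoc]
  · rw [eta_pword, ← hmc]
    conv_rhs => rw [hcsplit]
    rw [mu_append, mu_singleton]

end Core

section CoreMain

variable {A M N : Type*} [Monoid M] [Monoid N] [Finite N] (η : FreeMonoid A →* N)
  (α : FreeMonoid A →* M) (k : ℕ)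

/-- Tail version of `Prec`, allowing one extra inserted chunk at the very
front (with context idempotent `e`). -/
def TPd (e : N) (t₁ t₂ : Pattern A N) : Prop :=
  Prec η α k t₁ t₂ ∨
  ∃ (c : List (FreeMonoid A × N)) (x : FreeMonoid A) (l : List (FreeMonoid A × N)),
    t₂.1 = c ++ (x, e) :: l ∧ InQ η α k ((c : List (FreeMonoid A × N)), x) ∧
    η (pword ((c : List (FreeMonoid A × N)), x)) = e ∧ IsIdempotentElem e ∧
    Prec η α k t₁ ((l : List (FreeMonoid A × N)), t₂.2)

lemma lifthead {p q : Pattern A N} (hp : InQ η α k p) (hq : InQ η α k q)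
    {u₁ : FreeMonoid A} {e₁ : N} {l₁ l₂ : List (FreeMonoid A × N)}
    (hP : ∃ P, p.1 = P ++ (u₁, e₁) :: l₁)
    (htp : TPd η α k e₁ ((l₁ : List (FreeMonoid A × N)), p.2)
      ((l₂ : List (FreeMonoid A × N)), q.2)) :
    Prec η α k (((u₁, e₁) :: l₁ : List (FreeMonoid A × N)), p.2)
      (((u₁, e₁) :: l₂ : List (FreeMonoid A × N)), q.2) := by
  obtain ⟨P, hPd⟩ := hP
  have hu₁mem : (u₁, e₁) ∈ p.1 := by rw [hPd]; simp
  rcases htp with ⟨B, pl, hpl, hBc, hpe, hqe⟩ | ⟨c, x, l, ht2, hInc, hηc, hidem, hPrec⟩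
  · cases B with
    | nil =>
      simp only [List.foldr_nil] at hpe hqe
      rw [← hpe, Prod.mk.injEq] at hqe
      obtain ⟨h1, h2⟩ := hqe
      refine ⟨[], (((u₁, e₁) :: l₁ : List (FreeMonoid A × N)), p.2), ?_, by simp, by simp, ?_⟩
      · exact seg_right η α k hp hPd
      · simp only [List.foldr_nil]
        rw [h1, h2]
    | cons bh B' =>
      obtain ⟨p₁, g, r⟩ := bh
      simp only [List.foldr_cons] at hpe hqe
      set t₁ := B'.foldr (fun b acc => join b.1 b.2.1 acc) pl with ht₁
      set t₂ := B'.foldr (fun b acc => join b.1 b.2.1 (join b.2.2 b.2.1 acc)) pl with ht₂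
      have hpe' : ((l₁ : List (FreeMonoid A × N)), p.2)
          = (p₁.1 ++ (p₁.2, g) :: t₁.1, t₁.2) := by rw [hpe]; rfl
      have hqe' : ((l₂ : List (FreeMonoid A × N)), q.2)
          = (p₁.1 ++ (p₁.2, g) :: (r.1 ++ (r.2, g) :: t₂.1), t₂.2) := by rw [hqe]; rfl
      rw [Prod.mk.injEq] at hpe' hqe'
      obtain ⟨hl₁, hp2⟩ := hpe'
      obtain ⟨hl₂, hq2⟩ := hqe'
      refine ⟨((((u₁, e₁) :: p₁.1 : List (FreeMonoid A × N)), p₁.2), g, r) :: B', pl, hpl, ?_,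
        ?_, ?_⟩
      · intro b hb
        rcases List.mem_cons.mp hb with rfl | hb
        · refine ⟨?_, (hBc (p₁, g, r) (by simp)).2⟩
          refine seg_left η α k hp (P := P) (f := g) (R := t₁.1) ?_
          rw [hPd, hl₁]
          simp only [List.append_assoc, List.cons_append]
        · exact hBc b (by simp [hb])
      · simp only [List.foldr_cons, ← ht₁]
        show ((u₁, e₁) :: l₁, p.2) = (((u₁, e₁) :: p₁.1) ++ (p₁.2, g) :: t₁.1, t₁.2)
        rw [hl₁, hp2]
        rfl
      · simp only [List.foldr_cons, ← ht₂]
        show ((u₁, e₁) :: l₂, q.2)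
          = (((u₁, e₁) :: p₁.1) ++ (p₁.2, g) :: (r.1 ++ (r.2, g) :: t₂.1), t₂.2)
        rw [hl₂, hq2]
        rfl
  · obtain ⟨B, pl, hpl, hBc, hpe, hqe⟩ := hPrec
    have hbound : (FreeMonoid.toList u₁).length ≤ 2 * k := hp.2.2.1 (u₁, e₁) hu₁mem
    have ht2' : l₂ = c ++ (x, e₁) :: l := ht2
    refine ⟨((([] : List (FreeMonoid A × N)), u₁), e₁, ((c : List (FreeMonoid A × N)), x)) :: B,
      pl, hpl, ?_, ?_, ?_⟩
    · intro b hb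
      rcases List.mem_cons.mp hb with rfl | hb
      · exact ⟨inQ_empty η α k hbound, hInc, hidem, hηc⟩
      · exact hBc b hb
    · simp only [List.foldr_cons, ← hpe]
      rfl
    · simp only [List.foldr_cons, ← hqe]
      rw [show (((u₁, e₁) :: l₂ : List (FreeMonoid A × N)), q.2)
          = (((u₁, e₁) :: (c ++ (x, e₁) :: l) : List (FreeMonoid A × N)), q.2) by rw [ht2']]
      rfl

lemma core_base {p q : Pattern A N} (hp : InQ η α k p) (hq : InQ η α k q)
    (l₂ : List (FreeMonoid A × N)) (ρ e : N) (R : List (FreeMonoid A × N))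
    (hRd : q.1 = R ++ l₂) (hRne : R ≠ []) (hRe : (R.getLast hRne).2 = e)
    (hmuR : mu η R = ρ)
    (sub : List.Sublist (encA η ρ (some e) [] p.2) (encA η ρ (some e) l₂ q.2)) :
    TPd η α k e (([] : List (FreeMonoid A × N)), p.2)
      ((l₂ : List (FreeMonoid A × N)), q.2) := by
  rw [encA_nil] at sub
  obtain ⟨C, T, hCT, -⟩ := sublist_cons_split sub
  obtain ⟨hw21, hT, hnil, hlast, hmu⟩ := parse_sent η l₂ ρ (some e) q.2 C e ρ p.2 T hCT
  have hInQnil : InQ η α k (([] : List (FreeMonoid A × N)), p.2) :=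
    seg_right η α k hp (P := p.1) (by simp)
  have hPrecNil : Prec η α k (([] : List (FreeMonoid A × N)), p.2)
      (([] : List (FreeMonoid A × N)), q.2) := by
    refine ⟨[], (([] : List (FreeMonoid A × N)), p.2), hInQnil, by simp, by simp, ?_⟩
    simp only [List.foldr_nil]
    rw [hw21]
  by_cases hl2 : l₂ = []
  · subst hl2
    exact Or.inl hPrecNil
  · obtain ⟨c', xc, hceq, hInc, hηc, hidem⟩ := chunk_pkg η α k hq (c := l₂) (rest := [])
      (by rw [hRd]; simp) hRne hRe hmuR hmu hl2 (hlast hl2)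
    exact Or.inr ⟨c', xc, [], by rw [hceq], hInc, hηc, hidem, hPrecNil⟩

lemma core {p q : Pattern A N} (hp : InQ η α k p) (hq : InQ η α k q) :
    ∀ (n : ℕ) (l₂ l₁ : List (FreeMonoid A × N)) (ρ e : N) (R : List (FreeMonoid A × N)),
    l₂.length ≤ n →
    (∃ P, p.1 = P ++ l₁) →
    q.1 = R ++ l₂ → ∀ (hRne : R ≠ []), (R.getLast hRne).2 = e → mu η R = ρ →
    List.Sublist (encA η ρ (some e) l₁ p.2) (encA η ρ (some e) l₂ q.2) →
    TPd η α k e ((l₁ : List (FreeMonoid A × N)), p.2)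
      ((l₂ : List (FreeMonoid A × N)), q.2) := by
  intro n
  induction n with
  | zero =>
    intro l₂ l₁ ρ e R hn hP hRd hRne hRe hmuR sub
    have hl₂ : l₂ = [] := List.length_eq_zero_iff.mp (Nat.le_zero.mp hn)
    subst hl₂
    cases l₁ with
    | nil => exact core_base η α k hp hq [] ρ e R hRd hRne hRe hmuR sub
    | cons b l₁' =>
      exfalso
      obtain ⟨u₁, e₁⟩ := b
      rw [encA_cons, encA_nil] at sub
      obtain ⟨C, T, hCT, -⟩ := sublist_cons_split sub
      cases C with
      | nil =>
        rw [List.nil_append] at hCT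
        injection hCT with h1 h2
        cases h1
      | cons y C' =>
        rw [List.cons_append] at hCT
        injection hCT with h1 h2
        exact absurd h2.symm (by simp)
  | succ m ih =>
    intro l₂ l₁ ρ e R hn hP hRd hRne hRe hmuR sub
    cases l₁ with
    | nil => exact core_base η α k hp hq l₂ ρ e R hRd hRne hRe hmuR sub
    | cons b l₁' =>
      obtain ⟨u₁, e₁⟩ := b
      rw [encA_cons] at sub
      obtain ⟨C, T, hCT, hsub'⟩ := sublist_cons_split sub
      obtain ⟨c, l₂', hsplit, hcnil, hclast, hcmu, hTeq⟩ :=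
        parse_block η l₂ ρ (some e) q.2 C u₁ e₁ e ρ T hCT
      subst hTeq
      -- recursive call
      have hlen : l₂'.length ≤ m := by
        have : l₂.length = c.length + 1 + l₂'.length := by rw [hsplit]; simp; omega
        omega
      have hP' : ∃ P', p.1 = P' ++ l₁' := by
        obtain ⟨P, hPd⟩ := hP
        exact ⟨P ++ [(u₁, e₁)], by rw [hPd]; simp⟩
      have hRd' : q.1 = ((R ++ c) ++ [(u₁, e₁)]) ++ l₂' := by
        rw [hRd, hsplit]; simp
      have hRne' : (R ++ c) ++ [(u₁, e₁)] ≠ [] := by simp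
      have hRe' : (((R ++ c) ++ [(u₁, e₁)]).getLast hRne').2 = e₁ := by
        rw [List.getLast_append_singleton]
      have hmuR' : mu η ((R ++ c) ++ [(u₁, e₁)]) = ρ * η u₁ := by
        rw [mu_append, mu_append, mu_singleton, hmuR, hcmu]
      have htp := ih l₂' l₁' (ρ * η u₁) e₁ ((R ++ c) ++ [(u₁, e₁)]) hlen hP' hRd' hRne'
        hRe' hmuR' hsub'
      -- lift over the matched block
      have hPrec : Prec η α k (((u₁, e₁) :: l₁' : List (FreeMonoid A × N)), p.2)
          (((u₁, e₁) :: l₂' : List (FreeMonoid A × N)), q.2) := by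
        refine lifthead η α k hp hq ?_ htp
        obtain ⟨P, hPd⟩ := hP
        exact ⟨P, hPd⟩
      by_cases hc : c = []
      · subst hc
        rw [List.nil_append] at hsplit
        rw [hsplit]
        exact Or.inl hPrec
      · obtain ⟨c', xc, hceq, hInc, hηc, hidem⟩ := chunk_pkg η α k hq
          (c := c) (rest := (u₁, e₁) :: l₂') (by rw [hRd, hsplit]) hRne hRe hmuR hcmu hc
          (hclast hc)
        refine Or.inr ⟨c', xc, (u₁, e₁) :: l₂', ?_, hInc, hηc, hidem, hPrec⟩
        show l₂ = c' ++ (xc, e) :: ((u₁, e₁) :: l₂')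
        rw [hsplit, hceq]
        simp

end CoreMain

section Main

variable {A M N : Type*} [Monoid M] [Monoid N] [Finite N] (η : FreeMonoid A →* N)
  (α : FreeMonoid A →* M) (k : ℕ)

/-- The enriched encoding of a full pattern. -/
def enc (p : Pattern A N) : List (Letter A N) := encA η 1 none p.1 p.2

lemma main_lemma {p q : Pattern A N} (hp : InQ η α k p) (hq : InQ η α k q)
    (sub : List.Sublist (enc η p) (enc η q)) : Prec η α k p q := by
  obtain ⟨pl, pw⟩ := p
  obtain ⟨ql, qw⟩ := q
  cases pl with
  | nil =>
    cases ql with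
    | nil =>
      simp only [enc, encA_nil] at sub
      obtain ⟨C, T, hCT, -⟩ := sublist_cons_split sub
      cases C with
      | nil =>
        rw [List.nil_append] at hCT
        injection hCT with h1 h2
        injection h1 with ha hb
        injection hb with hb1 hc
        injection hc with hc1 hd
        exact ⟨[], (([] : List (FreeMonoid A × N)), pw), hp, by simp, by simp, by simp [hd]⟩
      | cons y C' =>
        rw [List.cons_append] at hCT
        injection hCT with h1 h2
        exact absurd h2.symm (by simp)
    | cons b' ql =>
      obtain ⟨v, g⟩ := b'
      exfalso
      simp only [enc, encA_nil, encA_cons] at sub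
      have hmem := List.singleton_sublist.mp sub
      rcases List.mem_cons.mp hmem with h | h
      · cases h
      · exact prevSome η _ _ _ _ _ h rfl
  | cons b pl =>
    obtain ⟨u, e⟩ := b
    cases ql with
    | nil =>
      exfalso
      simp only [enc, encA_cons, encA_nil] at sub
      have hmem : ((some (u, e), none, 1, 1) : Letter A N)
          ∈ [((none, none, 1, qw) : Letter A N)] := sub.subset (by simp)
      simp only [List.mem_singleton] at hmem
      cases hmem
    | cons b' ql =>
      obtain ⟨v, g⟩ := b'
      simp only [enc, encA_cons] at sub
      obtain ⟨C, T, hCT, hsub'⟩ := sublist_cons_split sub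
      cases C with
      | nil =>
        rw [List.nil_append, List.cons.injEq] at hCT
        obtain ⟨h1, h2⟩ := hCT
        have h3 : some (v, g) = some (u, e) := congrArg (fun x => x.1) h1
        have h4 := Option.some.inj h3
        obtain ⟨rfl, rfl⟩ : u = v ∧ e = g :=
          ⟨(congrArg Prod.fst h4).symm, (congrArg Prod.snd h4).symm⟩
        rw [← h2] at hsub'
        have htp := core η α k hp hq ql.length ql pl (1 * η u) e [(u, e)] le_rfl
          ⟨[(u, e)], by simp⟩ (by simp) (by simp) (by simp) (by simp) hsub'
        exact lifthead η α k hp hq ⟨[], by simp⟩ htp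
      | cons y C' =>
        exfalso
        rw [List.cons_append] at hCT
        injection hCT with h1 h2
        have hmem : ((some (u, e), none, 1, 1) : Letter A N)
            ∈ encA η (1 * η v) (some g) ql qw := by rw [h2]; simp
        exact prevSome η _ _ _ _ _ hmem rfl

end Main

section Fin

variable {A M N : Type*} [Fintype A] [Monoid M] [Monoid N] [Fintype N]
  (η : FreeMonoid A →* N) (α : FreeMonoid A →* M) (k : ℕ)

lemma finite_S :
    ({x : Letter A N | (∀ b ∈ x.1, (FreeMonoid.toList b.1).length ≤ 2 * k) ∧
      (FreeMonoid.toList x.2.2.2).length ≤ 2 * k}).Finite := by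
  have hW : ({w : FreeMonoid A | (FreeMonoid.toList w).length ≤ 2 * k}).Finite :=
    List.finite_length_le A (2 * k)
  have hF : (insert none (some '' ({w : FreeMonoid A |
      (FreeMonoid.toList w).length ≤ 2 * k} ×ˢ (Set.univ : Set N)))
      ×ˢ ((Set.univ : Set (Option N)) ×ˢ ((Set.univ : Set N) ×ˢ
        {w : FreeMonoid A | (FreeMonoid.toList w).length ≤ 2 * k}))).Finite := by
    refine Set.Finite.prod ?_ ?_
    · exact (((hW.prod Set.finite_univ).image some).insert none)
    · exact Set.finite_univ.prod (Set.finite_univ.prod hW)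
  refine hF.subset ?_
  rintro ⟨x1, x2, x3, x4⟩ ⟨hx1, hx2⟩
  refine ⟨?_, ⟨trivial, trivial, hx2⟩⟩
  cases x1 with
  | none => exact Set.mem_insert _ _
  | some b =>
    refine Set.mem_insert_of_mem _ ⟨b, ⟨?_, trivial⟩, rfl⟩
    exact hx1 b rfl

end Fin

/-- Lemma `polcov:wellorder`: `⪯` is a well-quasi-order on `Q`: every infinite
sequence of patterns in `Q` contains indices `i < j` with `p̄ᵢ ⪯ p̄ⱼ`. -/
theorem stmt_16 {A M N : Type*} [Fintype A] [Monoid M] [Fintype M]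
    [Monoid N] [Fintype N]
    (η : FreeMonoid A →* N) (α : FreeMonoid A →* M) (k : ℕ)
    (f : ℕ → Pattern A N) (hf : ∀ i, InQ η α k (f i)) :
    ∃ i j : ℕ, i < j ∧ Prec η α k (f i) (f j) := by
  have hSfin := finite_S (A := A) (N := N) k
  have hpwo : ({x : Letter A N | (∀ b ∈ x.1, (FreeMonoid.toList b.1).length ≤ 2 * k) ∧
      (FreeMonoid.toList x.2.2.2).length ≤ 2 * k}).PartiallyWellOrderedOn (· = ·) :=
    hSfin.partiallyWellOrderedOn
  have hH := hpwo.partiallyWellOrderedOn_sublistForall₂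
  have hmem : ∀ i, enc η (f i) ∈ {l : List (Letter A N) | ∀ x, x ∈ l →
      x ∈ {x : Letter A N | (∀ b ∈ x.1, (FreeMonoid.toList b.1).length ≤ 2 * k) ∧
        (FreeMonoid.toList x.2.2.2).length ≤ 2 * k}} := by
    intro i x hx
    exact enc_letter_bound η k (f i).1 1 none (f i).2 (hf i).2.2.1 (hf i).2.2.2 x hx
  obtain ⟨m, n, hmn, hsl⟩ := hH (fun i => ⟨enc η (f i), hmem i⟩)
  refine ⟨m, n, hmn, ?_⟩
  have hsub : List.Sublist (enc η (f m)) (enc η (f n)) := by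
    obtain ⟨l, hfor, hsub⟩ := List.sublistForall₂_iff.mp hsl
    rw [List.forall₂_eq_eq_eq] at hfor
    subst hfor
    exact hsub
  exact main_lemma η α k (hf m) (hf n) hsub

end Stmt16
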